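/- Let F be a field of characteristic zero and L a finite-dimensional Lie algebra over F. If L has only finitely many Lie ideals and the lattice of Lie ideals of L is complemented, then the number of Lie ideals of L is 2^n for some natural number n. -/

import Mathlib

section
variable {F : Type*} [Field F] [CharZero F]
    {L : Type*} [LieRing L] [LieAlgebra F L]

open Submodule

lemma core_aux [Finite (LieIdeal F L)] {a c B : LieIdeal F L} (ha : IsAtom a)
    (hcB : IsCompl c B) (haB : ¬ a ≤ B) (hac : ¬ a ≤ c) : False := by
  classical
  set c' := LieSubmodule.toSubmodule c with hc'
  set B' := LieSubmodule.toSubmodule B with hB'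
  have hcB' : IsCompl c' B' := by
    constructor
    · rw [disjoint_iff, hc', hB', ← LieSubmodule.inf_toSubmodule, hcB.inf_eq_bot,
        LieSubmodule.bot_toSubmodule]
    · rw [codisjoint_iff, hc', hB', ← LieSubmodule.sup_toSubmodule, hcB.sup_eq_top,
        LieSubmodule.top_toSubmodule]
  set π : L →ₗ[F] c' := Submodule.projectionOnto c' B' hcB' with hπ
  set p : L →ₗ[F] L := c'.subtype.comp π with hp
  -- basic facts about p
  have hpc : ∀ x, p x ∈ c := fun x => (π x).2
  have hpleft : ∀ x ∈ c, p x = x := by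
    intro x hx
    have := Submodule.projectionOnto_apply_of_mem_left hcB' hx
    simp only [hp, hπ, LinearMap.comp_apply, Submodule.subtype_apply, this]
  have hpright : ∀ x ∈ B, p x = 0 := by
    intro x hx
    have := Submodule.projectionOnto_apply_of_mem_right hcB' hx
    simp only [hp, hπ, LinearMap.comp_apply, Submodule.subtype_apply, this,
      ZeroMemClass.coe_zero]
  have hsub : ∀ x, x - p x ∈ B := by
    intro x
    have h1 : π (x - p x) = 0 := by
      rw [map_sub]
      have : π (p x) = π x := Submodule.projectionOnto_apply_left hcB' (π x)
      rw [this, sub_self]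
    exact (Submodule.projectionOnto_apply_eq_zero_iff hcB').mp h1
  -- p is equivariant
  have hequiv : ∀ (y x : L), p ⁅y, x⁆ = ⁅y, p x⁆ := by
    intro y x
    have hx : ⁅y, x⁆ = ⁅y, p x⁆ + ⁅y, x - p x⁆ := by
      rw [← lie_add]; congr 1; abel
    rw [hx, map_add, hpleft _ (c.lie_mem (hpc x)), hpright _ (B.lie_mem (hsub x)), add_zero]
  -- the family of Lie module endomorphisms
  have key : ∀ t : F, ∃ f : L →ₗ⁅F,L⁆ L, ∀ x, f x = p x + t • (x - p x) := by
    intro t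
    set g : L →ₗ[F] L := p + t • (LinearMap.id - p) with hg
    refine ⟨{ toLinearMap := g, map_lie' := ?_ }, fun x => ?_⟩
    · intro y x
      show g ⁅y, x⁆ = ⁅y, g x⁆
      simp only [hg, LinearMap.add_apply, LinearMap.smul_apply, LinearMap.sub_apply,
        LinearMap.id_apply, hequiv, lie_add, lie_smul, lie_sub]
    · show g x = _
      simp only [hg, LinearMap.add_apply, LinearMap.smul_apply, LinearMap.sub_apply,
        LinearMap.id_apply]
  choose f hf using key
  -- a ⊓ B = ⊥
  have haBbot : ∀ x, x ∈ a → x ∈ B → x = 0 := by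
    intro x hxa hxB
    have h1 : a ⊓ B = ⊥ := by
      rcases ha.le_iff.mp (inf_le_left : a ⊓ B ≤ a) with h | h
      · exact h
      · exact absurd (h ▸ (inf_le_right : a ⊓ B ≤ B)) haB
    have : x ∈ a ⊓ B := ⟨hxa, hxB⟩
    rwa [h1, LieSubmodule.mem_bot] at this
  -- choose z ∈ a with z - p z ≠ 0
  obtain ⟨z, hza, hz⟩ : ∃ z ∈ a, z - p z ≠ 0 := by
    by_contra h
    push_neg at h
    apply hac
    intro x hx
    have hx' : x = p x := sub_eq_zero.mp (h x hx)
    rw [hx']; exact hpc x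
  -- injectivity of t ↦ map (f t) a
  have hinj : Function.Injective (fun t : F => LieSubmodule.map (f t) a) := by
    intro s t hst
    dsimp only at hst
    have h1 : f s z ∈ LieSubmodule.map (f t) a := by
      rw [← hst]; exact LieSubmodule.mem_map_of_mem hza
    rw [LieSubmodule.mem_map] at h1
    obtain ⟨w, hwa, hw⟩ := h1
    rw [hf, hf] at hw
    -- uniqueness of decomposition
    have hXc : p w - p z ∈ c := c.sub_mem (hpc w) (hpc z)
    have hYB : t • (w - p w) - s • (z - p z) ∈ B :=
      B.sub_mem (B.smul_mem t (hsub w)) (B.smul_mem s (hsub z))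
    have hsum : (p w - p z) + (t • (w - p w) - s • (z - p z)) = 0 := by
      have h0 : (p w - p z) + (t • (w - p w) - s • (z - p z))
          = (p w + t • (w - p w)) - (p z + s • (z - p z)) := by abel
      rw [h0, hw, sub_self]
    have hXB : p w - p z ∈ B := by
      have : p w - p z = -(t • (w - p w) - s • (z - p z)) := by
        rw [eq_neg_iff_add_eq_zero]; exact hsum
      rw [this]; exact B.neg_mem hYB
    have hX0 : p w - p z = (0 : L) := by
      have hmem : p w - p z ∈ c ⊓ B := ⟨hXc, hXB⟩
      rwa [hcB.inf_eq_bot, LieSubmodule.mem_bot] at hmem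
    have hwz : w = z := by
      have h2 : w - z ∈ B := by
        have : w - z = (w - p w) - (z - p z) + (p w - p z) := by abel
        rw [this, hX0, add_zero]
        exact B.sub_mem (hsub w) (hsub z)
      have h3 : w - z ∈ a := a.sub_mem hwa hza
      exact sub_eq_zero.mp (haBbot _ h3 h2)
    have hY0 : t • (w - p w) - s • (z - p z) = 0 := by
      have := hsum
      rw [hX0, zero_add] at this
      exact this
    rw [hwz] at hY0
    have hts : (t - s) • (z - p z) = 0 := by
      rw [sub_smul, sub_eq_zero]
      exact sub_eq_zero.mp hY0
    rcases smul_eq_zero.mp hts with h | h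
    · exact (sub_eq_zero.mp h).symm
    · exact absurd h hz
  exact absurd (Finite.of_injective (fun t : F => LieSubmodule.map (f t) a) hinj)
    (not_finite_iff_infinite.mpr inferInstance)

end

section
variable {F : Type*} [Field F] [CharZero F]
    {L : Type*} [LieRing L] [LieAlgebra F L]
    [Finite (LieIdeal F L)] [ComplementedLattice (LieIdeal F L)]

lemma key_mem :
    ∀ t : Finset (LieIdeal F L), (∀ c ∈ t, IsAtom c) →
      ∀ a : LieIdeal F L, IsAtom a → a ≤ t.sup id → a ∈ t := by
  classical
  intro t
  induction t using Finset.strongInduction with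
  | _ t ih =>
    intro hat a ha hle
    by_cases hmin : ∃ c ∈ t, a ≤ (t.erase c).sup id
    · obtain ⟨c, hc, h⟩ := hmin
      exact Finset.mem_of_mem_erase
        (ih (t.erase c) (Finset.erase_ssubset hc)
          (fun d hd => hat d (Finset.mem_of_mem_erase hd)) a ha h)
    · push_neg at hmin
      obtain ⟨c, hc⟩ : t.Nonempty := by
        rcases Finset.eq_empty_or_nonempty t with rfl | h
        · rw [Finset.sup_empty] at hle
          exact absurd (le_bot_iff.mp hle) ha.1
        · exact h
      by_cases hac : a = c
      · exact hac ▸ hc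
      set B0 := (t.erase c).sup id with hB0def
      have hB0 : ¬ a ≤ B0 := hmin c hc
      have hsupt : t.sup id = c ⊔ B0 := by
        conv_lhs => rw [← Finset.insert_erase hc]
        rw [Finset.sup_insert]
        rfl
      have hle' : a ≤ c ⊔ B0 := hsupt ▸ hle
      have hcatom := hat c hc
      have hcB0 : c ⊓ B0 = ⊥ := by
        rcases hcatom.le_iff.mp (inf_le_left : c ⊓ B0 ≤ c) with h1 | h1
        · exact h1
        · exact absurd (by rw [sup_eq_right.mpr (inf_eq_left.mp h1)] at hle'; exact hle') hB0
      obtain ⟨D, hD⟩ := exists_isCompl (c ⊔ B0)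
      set B := B0 ⊔ D with hBdef
      have hBinf : B ⊓ (c ⊔ B0) = B0 := by
        rw [hBdef, sup_inf_assoc_of_le D (le_sup_right : B0 ≤ c ⊔ B0),
          disjoint_iff.mp hD.disjoint.symm, sup_bot_eq]
      have hcB : IsCompl c B := by
        constructor
        · rw [disjoint_iff]
          have h1 : c ⊓ B ≤ c ⊓ B0 := by
            refine le_inf inf_le_left ?_
            rw [← hBinf]
            exact le_inf inf_le_right (inf_le_left.trans le_sup_left)
          rw [hcB0] at h1
          exact le_bot_iff.mp h1
        · rw [codisjoint_iff, hBdef, ← sup_assoc]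
          exact codisjoint_iff.mp hD.codisjoint
      have haB : ¬ a ≤ B := by
        intro h
        apply hB0
        have h2 : a ≤ B ⊓ (c ⊔ B0) := le_inf h hle'
        rwa [hBinf] at h2
      have hac' : ¬ a ≤ c := by
        intro h
        rcases hcatom.le_iff.mp h with h1 | h1
        · exact ha.1 h1
        · exact hac h1
      exact (core_aux ha hcB haB hac').elim

end

/-- A finite-dimensional Lie algebra over a field of characteristic zero with finitely
many Lie ideals whose ideal lattice is complemented has exactly `2 ^ n` ideals for
some natural number `n`. -/
theorem card_lieIdeal_eq_two_pow_of_complemented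
    (F : Type*) [Field F] [CharZero F]
    (L : Type*) [LieRing L] [LieAlgebra F L] [FiniteDimensional F L]
    [Finite (LieIdeal F L)] [ComplementedLattice (LieIdeal F L)] :
    ∃ n : ℕ, Nat.card (LieIdeal F L) = 2 ^ n := by
  classical
  have : Fintype (LieIdeal F L) := Fintype.ofFinite _
  have hA : Fintype {I : LieIdeal F L // IsAtom I} := Fintype.ofFinite _
  refine ⟨Fintype.card {I : LieIdeal F L // IsAtom I}, ?_⟩
  set g : Finset {I : LieIdeal F L // IsAtom I} → LieIdeal F L :=
    fun s => s.sup Subtype.val with hg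
  have hbij : Function.Bijective g := by
    constructor
    · intro s t h
      have haux : ∀ s t : Finset {I : LieIdeal F L // IsAtom I}, g s = g t →
          ∀ a, a ∈ s → a ∈ t := by
        intro s t h a has
        have h1 : a.val ≤ g t := h ▸ Finset.le_sup has
        have h2 : g t = (t.image Subtype.val).sup id := by
          rw [Finset.sup_image]
          rfl
        have h3 : a.val ∈ t.image Subtype.val := by
          apply key_mem
          · intro c hcmem
            obtain ⟨b, hb, rfl⟩ := Finset.mem_image.mp hcmem
            exact b.2
          · exact a.2
          · rw [← h2]; exact h1
        obtain ⟨b, hb, hba⟩ := Finset.mem_image.mp h3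
        rwa [show b = a from Subtype.ext hba] at hb
      ext a
      exact ⟨haux s t h a, haux t s h.symm a⟩
    · intro I
      refine ⟨Finset.univ.filter (fun x => x.val ≤ I), ?_⟩
      have h1 : g (Finset.univ.filter (fun x : {I : LieIdeal F L // IsAtom I} => x.val ≤ I))
          = sSup {J : LieIdeal F L | IsAtom J ∧ J ≤ I} := by
        apply le_antisymm
        · apply Finset.sup_le
          intro b hb
          exact le_sSup ⟨b.2, (Finset.mem_filter.mp hb).2⟩
        · apply sSup_le
          rintro J ⟨hJ1, hJ2⟩
          have hmem : (⟨J, hJ1⟩ : {I : LieIdeal F L // IsAtom I}) ∈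
              Finset.univ.filter (fun x : {I : LieIdeal F L // IsAtom I} => x.val ≤ I) :=
            Finset.mem_filter.mpr ⟨Finset.mem_univ _, hJ2⟩
          exact Finset.le_sup (f := Subtype.val) hmem
      rw [h1, sSup_atoms_le_eq]
  rw [Nat.card_eq_fintype_card, ← Fintype.card_finset,
    Fintype.card_of_bijective hbij]
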